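/- The Gaussian curvature of the equatorial plane in the Schwarzschild optical metric equals K(r) = -(2m/r³)(1 - 3m/(2r)), and in particular K(r) < 0 for all r > 2m. -/

import Mathlib

open Real

lemma sch_aux (m : ℝ) (hm : 0 < m) (x : ℝ) (hx : 2 * m < x) :
    deriv (fun y : ℝ => y ^ 2 * (1 - 2 * m / y)⁻¹) x /
      Real.sqrt ((1 - 2 * m / x)⁻¹ ^ 2 * (x ^ 2 * (1 - 2 * m / x)⁻¹)) =
    2 * (x - 3 * m) / Real.sqrt (x * (x - 2 * m)) := by
  have hx0 : 0 < x := by linarith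
  have hxm : 0 < x - 2 * m := by linarith
  have h1m : 1 - 2 * m / x = (x - 2 * m) / x := by field_simp
  have h1mpos : 0 < 1 - 2 * m / x := by rw [h1m]; positivity
  have h1mne : 1 - 2 * m / x ≠ 0 := ne_of_gt h1mpos
  -- inner derivative
  have h1 : HasDerivAt (fun y : ℝ => 1 - 2 * m / y) (2 * m / x ^ 2) x := by
    have h := ((hasDerivAt_inv (ne_of_gt hx0)).const_mul (2 * m)).const_sub 1
    exact h.congr_deriv (by field_simp)
  have h2 : HasDerivAt (fun y : ℝ => (1 - 2 * m / y)⁻¹)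
      (-(2 * m / x ^ 2) / (1 - 2 * m / x) ^ 2) x := h1.inv h1mne
  have h3 : HasDerivAt (fun y : ℝ => y ^ 2 * (1 - 2 * m / y)⁻¹)
      (2 * x * (1 - 2 * m / x)⁻¹ + x ^ 2 * (-(2 * m / x ^ 2) / (1 - 2 * m / x) ^ 2)) x := by
    have := (hasDerivAt_pow 2 x).mul h2
    exact this.congr_deriv (by push_cast; ring)
  have hderiv : deriv (fun y : ℝ => y ^ 2 * (1 - 2 * m / y)⁻¹) x
      = 2 * x ^ 2 * (x - 3 * m) / (x - 2 * m) ^ 2 := by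
    rw [h3.deriv, h1m]
    field_simp
    ring
  have harg : (1 - 2 * m / x)⁻¹ ^ 2 * (x ^ 2 * (1 - 2 * m / x)⁻¹)
      = (x * (x - 2 * m)) * (x ^ 2 / (x - 2 * m) ^ 2) ^ 2 := by
    rw [h1m]
    field_simp
  have hsqrt : Real.sqrt ((1 - 2 * m / x)⁻¹ ^ 2 * (x ^ 2 * (1 - 2 * m / x)⁻¹))
      = Real.sqrt (x * (x - 2 * m)) * (x ^ 2 / (x - 2 * m) ^ 2) := by
    rw [harg, Real.sqrt_mul (by positivity), Real.sqrt_sq (by positivity)]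
  rw [hderiv, hsqrt]
  have hs : 0 < Real.sqrt (x * (x - 2 * m)) := Real.sqrt_pos.mpr (by positivity)
  field_simp

/-- The Gaussian curvature of the equatorial Schwarzschild optical metric
`E dr² + G dφ²` with `E = (1-2m/r)⁻²`, `G = r²(1-2m/r)⁻¹`, computed via
`K = -(1/(2√(EG))) d/dr (G'/√(EG))`, equals `-(2m/r³)(1 - 3m/(2r))`, which is
negative for `r > 2m`. -/
theorem schwarzschild_gaussian_curvature (m : ℝ) (hm : 0 < m) (r : ℝ) (hr : 2 * m < r) :
    (-(1 / (2 * Real.sqrt (((1 - 2 * m / r)⁻¹ ^ 2) * (r ^ 2 * (1 - 2 * m / r)⁻¹)))) *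
        deriv (fun x : ℝ =>
          deriv (fun y : ℝ => y ^ 2 * (1 - 2 * m / y)⁻¹) x /
            Real.sqrt ((1 - 2 * m / x)⁻¹ ^ 2 * (x ^ 2 * (1 - 2 * m / x)⁻¹))) r
      = -(2 * m / r ^ 3) * (1 - 3 * m / (2 * r))) ∧
    -(2 * m / r ^ 3) * (1 - 3 * m / (2 * r)) < 0 := by
  have hr0 : 0 < r := by linarith
  have hrm : 0 < r - 2 * m := by linarith
  constructor
  · -- eventual equality near r
    have hev : (fun x : ℝ =>
          deriv (fun y : ℝ => y ^ 2 * (1 - 2 * m / y)⁻¹) x /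
            Real.sqrt ((1 - 2 * m / x)⁻¹ ^ 2 * (x ^ 2 * (1 - 2 * m / x)⁻¹)))
        =ᶠ[nhds r] (fun x : ℝ => 2 * (x - 3 * m) / Real.sqrt (x * (x - 2 * m))) := by
      filter_upwards [((isOpen_lt continuous_const continuous_id).mem_nhds hr : {x : ℝ | 2 * m < x} ∈ nhds r)] with x hx
      exact sch_aux m hm x hx
    rw [hev.deriv_eq]
    set s := Real.sqrt (r * (r - 2 * m)) with hs_def
    have hs : 0 < s := Real.sqrt_pos.mpr (by positivity)
    have hs2 : s ^ 2 = r * (r - 2 * m) := Real.sq_sqrt (by positivity)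
    -- derivative of g
    have hq : HasDerivAt (fun x : ℝ => x * (x - 2 * m)) (2 * r - 2 * m) r := by
      have := (hasDerivAt_id r).mul ((hasDerivAt_id r).sub_const (2 * m))
      exact this.congr_deriv (by simp only [id_eq]; ring)
    have hsq : HasDerivAt (fun x : ℝ => Real.sqrt (x * (x - 2 * m)))
        ((2 * r - 2 * m) / (2 * s)) r := hq.sqrt (by positivity)
    have hinv : HasDerivAt (fun x : ℝ => (Real.sqrt (x * (x - 2 * m)))⁻¹)
        (-((2 * r - 2 * m) / (2 * s)) / s ^ 2) r := hsq.inv (ne_of_gt hs)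
    have hg : HasDerivAt (fun x : ℝ => 2 * (x - 3 * m) / Real.sqrt (x * (x - 2 * m)))
        (2 * s⁻¹ + (2 * (r - 3 * m)) * (-((2 * r - 2 * m) / (2 * s)) / s ^ 2)) r := by
      have hlin : HasDerivAt (fun x : ℝ => 2 * (x - 3 * m)) 2 r := by
        simpa using ((hasDerivAt_id r).sub_const (3 * m)).const_mul 2
      exact hlin.mul hinv
    rw [hg.deriv]
    -- also rewrite the outer sqrt
    have harg : (1 - 2 * m / r)⁻¹ ^ 2 * (r ^ 2 * (1 - 2 * m / r)⁻¹)
        = (r * (r - 2 * m)) * (r ^ 2 / (r - 2 * m) ^ 2) ^ 2 := by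
      have h1m : 1 - 2 * m / r = (r - 2 * m) / r := by field_simp
      rw [h1m]; field_simp
    have hS : Real.sqrt ((1 - 2 * m / r)⁻¹ ^ 2 * (r ^ 2 * (1 - 2 * m / r)⁻¹))
        = s * (r ^ 2 / (r - 2 * m) ^ 2) := by
      rw [harg, Real.sqrt_mul (by positivity), Real.sqrt_sq (by positivity)]
    rw [hS]
    have hs4 : s ^ 4 = (r * (r - 2 * m)) ^ 2 := by rw [← hs2]; ring
    have hDval : 2 * s⁻¹ + 2 * (r - 3 * m) * (-((2 * r - 2 * m) / (2 * s)) / s ^ 2)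
        = (4 * m * r - 6 * m ^ 2) / s ^ 3 := by
      have h1 : 2 * s⁻¹ + 2 * (r - 3 * m) * (-((2 * r - 2 * m) / (2 * s)) / s ^ 2)
          = (2 * s ^ 2 - (r - 3 * m) * (2 * r - 2 * m)) / s ^ 3 := by
        field_simp; ring
      rw [h1, hs2]; ring_nf
    rw [hDval]
    have h2 : (1 / (2 * (s * (r ^ 2 / (r - 2 * m) ^ 2)))) * ((4 * m * r - 6 * m ^ 2) / s ^ 3)
        = (4 * m * r - 6 * m ^ 2) * (r - 2 * m) ^ 2 / (2 * r ^ 2 * s ^ 4) := by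
      field_simp
    rw [neg_mul, h2, hs4]
    rw [neg_mul, neg_inj, div_eq_iff (by positivity)]
    field_simp
    ring
  · have h1 : 0 < 2 * m / r ^ 3 := by positivity
    have h2 : 0 < 1 - 3 * m / (2 * r) := by
      rw [sub_pos, div_lt_one (by linarith)]; linarith
    nlinarith
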